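/- Let G be a simple undirected graph on {1,…,N} and let q_1,…,q_N ≥ 0 with Σ_{i=1}^N q_i = 1 and Q_i := q_i + Σ_{j adjacent to i} q_j > 0 for all i. Then Σ_{i=1}^N q_i / Q_i ≤ α(G), where α(G) is the independence number of G, i.e. the largest cardinality of a set of pairwise non-adjacent vertices. -/

import Mathlib

open Finset

lemma stmt_11_aux {N : ℕ} (G : SimpleGraph (Fin N)) [DecidableRel G.Adj]
    (q : Fin N → ℝ) (hq0 : ∀ i, 0 ≤ q i) :
    ∀ n : ℕ, ∀ V : Finset (Fin N),
      (∀ S : Finset (Fin N), S ⊆ V → (∀ i ∈ S, ∀ j ∈ S, ¬ G.Adj i j) → S.card ≤ n) →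
      ∑ i ∈ V, q i / (∑ j ∈ V ∩ insert i (G.neighborFinset i), q j) ≤ (n : ℝ) := by
  intro n
  induction n with
  | zero =>
    intro V hV
    rcases V.eq_empty_or_nonempty with rfl | ⟨v, hv⟩
    · simp
    · exfalso
      have h := hV {v} (by simpa) (by simp [G.irrefl])
      simp at h
  | succ m ih =>
    intro V hV
    rcases V.eq_empty_or_nonempty with rfl | hne
    · simp
      positivity
    obtain ⟨v, hvV, hvmin⟩ :=
      V.exists_min_image (fun i => ∑ j ∈ V ∩ insert i (G.neighborFinset i), q j) hne
    set Nv := insert v (G.neighborFinset v) with hNv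
    set V' := V \ Nv with hV'
    have hsplit : V = (V ∩ Nv) ∪ V' := by
      rw [hV']
      ext x
      simp only [mem_union, mem_inter, mem_sdiff]
      tauto
    have hdisj : Disjoint (V ∩ Nv) V' := by
      rw [hV']
      exact disjoint_sdiff.mono_left inter_subset_right
    have hsub : ∀ i ∈ V' , V' ∩ insert i (G.neighborFinset i) ⊆ V ∩ insert i (G.neighborFinset i) := by
      intro i _
      exact inter_subset_inter (sdiff_subset) (Subset.refl _)
    -- second part
    have hV'hyp : ∀ S : Finset (Fin N), S ⊆ V' → (∀ i ∈ S, ∀ j ∈ S, ¬ G.Adj i j) → S.card ≤ m := by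
      intro S hSV' hSind
      have hnadj : ∀ s ∈ S, ¬ G.Adj v s := by
        intro s hs hadj
        have hmem := hSV' hs
        rw [hV', mem_sdiff] at hmem
        exact hmem.2 (by rw [hNv]; exact mem_insert_of_mem ((SimpleGraph.mem_neighborFinset G v s).mpr hadj))
      have hvS : v ∉ S := by
        intro hv
        have := hSV' hv
        rw [hV'] at this
        simp [hNv] at this
      have hins : (insert v S).card ≤ m + 1 := by
        apply hV
        · intro x hx
          rcases mem_insert.mp hx with rfl | hx
          · exact hvV
          · exact (sdiff_subset) (hSV' hx)
        · intro i hi j hj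
          rcases mem_insert.mp hi with hi' | hi'
          · rcases mem_insert.mp hj with hj' | hj'
            · rw [hi', hj']; exact G.irrefl
            · rw [hi']; exact hnadj j hj'
          · rcases mem_insert.mp hj with hj' | hj'
            · rw [hj']; exact fun h => hnadj i hi' h.symm
            · exact hSind i hi' j hj' 
      rwa [card_insert_of_notMem hvS, Nat.add_le_add_iff_right] at hins
    have h2 : ∑ i ∈ V', q i / (∑ j ∈ V ∩ insert i (G.neighborFinset i), q j)
        ≤ (m : ℝ) := by
      refine le_trans (Finset.sum_le_sum ?_) (ih V' hV'hyp)
      intro i hi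
      set a := ∑ j ∈ V' ∩ insert i (G.neighborFinset i), q j with ha
      set b := ∑ j ∈ V ∩ insert i (G.neighborFinset i), q j with hb
      have hab : a ≤ b := Finset.sum_le_sum_of_subset_of_nonneg (hsub i hi)
        (fun j _ _ => hq0 j)
      have ha0 : 0 ≤ a := Finset.sum_nonneg (fun j _ => hq0 j)
      rcases eq_or_lt_of_le ha0 with heq | hpos
      · have hqi : q i = 0 := by
          have himem : i ∈ V' ∩ insert i (G.neighborFinset i) := by
            simp [hi]
          have := Finset.sum_le_sum_of_subset_of_nonneg
            (Finset.singleton_subset_iff.mpr himem) (fun j _ _ => hq0 j)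
          simp only [Finset.sum_singleton] at this
          have := this.trans_eq heq.symm
          exact le_antisymm this (hq0 i)
        simp [hqi]
      · exact div_le_div_of_nonneg_left (hq0 i) hpos hab
    -- first part
    have h1 : ∑ i ∈ V ∩ Nv, q i / (∑ j ∈ V ∩ insert i (G.neighborFinset i), q j) ≤ 1 := by
      set Qv := ∑ j ∈ V ∩ Nv, q j with hQv
      have hQv0 : 0 ≤ Qv := Finset.sum_nonneg (fun j _ => hq0 j)
      rcases eq_or_lt_of_le hQv0 with heq | hpos
      · have : ∀ i ∈ V ∩ Nv, q i = 0 := by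
          intro i hi
          have := Finset.sum_le_sum_of_subset_of_nonneg
            (Finset.singleton_subset_iff.mpr hi) (fun j _ _ => hq0 j)
          simp only [Finset.sum_singleton] at this
          exact le_antisymm (this.trans_eq heq.symm) (hq0 i)
        calc ∑ i ∈ V ∩ Nv, q i / (∑ j ∈ V ∩ insert i (G.neighborFinset i), q j)
            = ∑ i ∈ V ∩ Nv, (0:ℝ) := by
              apply Finset.sum_congr rfl
              intro i hi
              rw [this i hi, zero_div]
          _ ≤ 1 := by simp
      · have hle : ∀ i ∈ V ∩ Nv,
            q i / (∑ j ∈ V ∩ insert i (G.neighborFinset i), q j) ≤ q i / Qv := by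
          intro i hi
          have hmin := hvmin i (mem_inter.mp hi).1
          exact div_le_div_of_nonneg_left (hq0 i) hpos hmin
        calc ∑ i ∈ V ∩ Nv, q i / (∑ j ∈ V ∩ insert i (G.neighborFinset i), q j)
            ≤ ∑ i ∈ V ∩ Nv, q i / Qv := Finset.sum_le_sum hle
          _ = Qv / Qv := by rw [← Finset.sum_div]
          _ = 1 := div_self hpos.ne'
    calc ∑ i ∈ V, q i / (∑ j ∈ V ∩ insert i (G.neighborFinset i), q j)
        = ∑ i ∈ (V ∩ Nv) ∪ V', q i / (∑ j ∈ V ∩ insert i (G.neighborFinset i), q j) := by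
          rw [← hsplit]
      _ = (∑ i ∈ V ∩ Nv, q i / (∑ j ∈ V ∩ insert i (G.neighborFinset i), q j))
          + ∑ i ∈ V', q i / (∑ j ∈ V ∩ insert i (G.neighborFinset i), q j) :=
          Finset.sum_union hdisj
      _ ≤ 1 + m := add_le_add h1 h2
      _ = ((m + 1 : ℕ) : ℝ) := by push_cast; ring

/-- `Σ_i q_i / Q_i ≤ α(G)` where `Q_i` is the probability mass of the closed neighborhood
of `i` and `α(G)` is the independence number of the simple graph `G`. -/
theorem stmt_11 (N : ℕ) (G : SimpleGraph (Fin N)) [DecidableRel G.Adj]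
    (q : Fin N → ℝ) (hq0 : ∀ i, 0 ≤ q i) (hq1 : ∑ i : Fin N, q i = 1)
    (Q : Fin N → ℝ) (hQ : ∀ i, Q i = q i + ∑ j ∈ G.neighborFinset i, q j)
    (hQpos : ∀ i, 0 < Q i)
    (α : ℕ)
    (hα : IsGreatest
      {n : ℕ | ∃ S : Finset (Fin N),
        (∀ i ∈ S, ∀ j ∈ S, ¬ G.Adj i j) ∧ S.card = n} α) :
    ∑ i : Fin N, q i / Q i ≤ (α : ℝ) := by
  have key := stmt_11_aux G q hq0 α Finset.univ
    (fun S _ hS => hα.2 ⟨S, hS, rfl⟩)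
  have hrw : ∀ i : Fin N,
      (∑ j ∈ Finset.univ ∩ insert i (G.neighborFinset i), q j) = Q i := by
    intro i
    rw [Finset.univ_inter, Finset.sum_insert (by simp [G.irrefl]), hQ]
  calc ∑ i : Fin N, q i / Q i
      = ∑ i ∈ Finset.univ, q i / (∑ j ∈ Finset.univ ∩ insert i (G.neighborFinset i), q j) := by
        apply Finset.sum_congr rfl
        intro i _
        rw [hrw i]
    _ ≤ (α : ℝ) := key
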